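/- Let A be an integrally closed (normal) integral domain of mixed characteristic p > 0, let k ≥ 1 be an integer, and suppose there exists t ∈ A with t^{p^k} = p. Then for every a ∈ A with a^{p^k} ∈ pA one has a ∈ tA; equivalently, the k-th iterate of the Frobenius endomorphism of A/pA induces an injective ring homomorphism A/tA → A/pA. -/

import Mathlib

/-- **Lemma 4.4 (1).** Let `A` be an integrally closed (normal) integral domain of mixed
characteristic `p > 0`, let `k ≥ 1`, and suppose `t ∈ A` satisfies `t ^ (p ^ k) = p`. Then for
every `a ∈ A` with `a ^ (p ^ k) ∈ pA` one has `a ∈ tA`; equivalently, the `k`-th iterate of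
the Frobenius endomorphism of `A/pA` induces an injection `A/tA → A/pA`. -/
theorem mem_span_root_of_pow_mem_span_p
    (A : Type) [CommRing A] [IsDomain A] [IsIntegrallyClosed A]
    (p : ℕ) (hp : p.Prime) [CharZero A] (hpu : ¬ IsUnit (p : A))
    (k : ℕ) (hk : 1 ≤ k) (t : A) (ht : t ^ p ^ k = (p : A)) :
    ∀ a : A, a ^ p ^ k ∈ Ideal.span {(p : A)} → a ∈ Ideal.span {t} := by
  intro a ha
  rw [Ideal.mem_span_singleton] at ha ⊢
  obtain ⟨b, hb⟩ := ha
  have hp0 : (p : A) ≠ 0 := by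
    exact_mod_cast Nat.cast_ne_zero.mpr hp.ne_zero
  have ht0 : t ≠ 0 := by
    intro h
    apply hp0
    rw [← ht, h, zero_pow (pow_ne_zero k hp.ne_zero)]
  let K := FractionRing A
  let f := algebraMap A K
  have hf : Function.Injective f := IsFractionRing.injective A K
  have hft : f t ≠ 0 := fun h => ht0 (hf (by simpa using h))
  have hx : (f a / f t) ^ (p ^ k) = f b := by
    rw [div_pow, ← map_pow, ← map_pow, ht, hb, map_mul, mul_div_assoc, mul_comm, div_mul_cancel₀]
    · exact fun h => hp0 (hf (by simpa using h))
  have hint : IsIntegral A (f a / f t) := by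
    refine IsIntegral.of_pow (pow_pos hp.pos k) ?_
    rw [hx]
    exact isIntegral_algebraMap
  obtain ⟨c, hc⟩ := IsIntegrallyClosed.isIntegral_iff.mp hint
  refine ⟨c, hf ?_⟩
  rw [map_mul]
  rw [show f c = f a / f t from hc, mul_div_assoc', mul_comm, mul_div_assoc, div_self hft, mul_one]
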